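/- Let x ∈ W^{N,2}((0,1); H) for a Hilbert space H, let P_k ∈ L(H) for k = 1,…,N satisfy P_k* = (−1)^{k+1} P_k, and define the block operator matrix Q on H^N by Q_{ij} = (−1)^{i−1} P_{i+j−1} if i+j ≤ N+1 and Q_{ij} = 0 otherwise. Then 2 Re⟨Σ_{k=1}^N P_k x^{(k)}, x⟩_{L^2((0,1);H)} = Φ1(x)* Q Φ1(x) − Φ0(x)* Q Φ0(x), where Φ_i(x) = (x(i), x'(i), …, x^{(N−1)}(i)). -/

import Mathlib

open ContinuousLinearMap MeasureTheory

lemma reindex_sum (N : ℕ) (c : ℕ → ℕ → ℝ) :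
    ∑ k ∈ Finset.Icc 1 N, ∑ i ∈ Finset.range k, c i (k - 1 - i)
      = ∑ i ∈ Finset.range N, ∑ j ∈ Finset.range N,
          if i + j + 1 ≤ N then c i j else 0 := by
  have : ∑ i ∈ Finset.range N, ∑ j ∈ Finset.range N,
          (if i + j + 1 ≤ N then c i j else 0)
      = ∑ p ∈ (Finset.range N ×ˢ Finset.range N).filter
          (fun p => p.1 + p.2 + 1 ≤ N), c p.1 p.2 := by
    rw [Finset.sum_filter, Finset.sum_product]
  rw [this, Finset.sum_sigma']
  apply Finset.sum_nbij' (fun p => (p.2, p.1 - 1 - p.2))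
    (fun p => (⟨p.1 + p.2 + 1, p.1⟩ : (_ : ℕ) × ℕ))
  · intro a ha
    simp only [Finset.mem_sigma, Finset.mem_Icc, Finset.mem_range, Finset.mem_filter,
      Finset.mem_product] at ha ⊢
    omega
  · intro a ha
    simp only [Finset.mem_sigma, Finset.mem_Icc, Finset.mem_range, Finset.mem_filter,
      Finset.mem_product] at ha ⊢
    omega
  · intro a ha
    simp only [Finset.mem_sigma, Finset.mem_Icc, Finset.mem_range] at ha
    ext <;> simp <;> omega
  · intro a ha
    simp only [Finset.mem_filter, Finset.mem_product, Finset.mem_range] at ha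
    ext <;> simp <;> omega
  · intro a ha
    simp only [Finset.mem_sigma, Finset.mem_Icc, Finset.mem_range] at ha
    congr 1

open ContinuousLinearMap in
/-- Integration by parts for the order-`N` port-Hamiltonian operator:
`2 Re⟨∑ₖ Pₖ x⁽ᵏ⁾, x⟩_{L²(0,1)} = Φ₁(x)* Q Φ₁(x) − Φ₀(x)* Q Φ₀(x)`,
where `Q_{ij} = (−1)^{i−1} P_{i+j−1}` for `i+j ≤ N+1` (1-indexed) and `0` otherwise. -/
theorem integration_by_parts_orderN {H : Type*} [NormedAddCommGroup H]
    [InnerProductSpace ℂ H] [CompleteSpace H]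
    (N : ℕ) (hN : 1 ≤ N) (P : ℕ → H →L[ℂ] H)
    (hP : ∀ k, 1 ≤ k → k ≤ N → adjoint (P k) = ((-1 : ℂ)) ^ (k + 1) • P k)
    (x : ℝ → H) (hx : ContDiff ℝ N x) :
    2 * (∫ t in Set.Ioo (0:ℝ) 1,
        (inner ℂ (∑ k ∈ Finset.Icc 1 N, P k (iteratedDeriv k x t)) (x t) : ℂ)).re =
      (∑ i : Fin N, ∑ j : Fin N,
        if (i : ℕ) + (j : ℕ) + 1 ≤ N then
          (-1 : ℝ) ^ (i : ℕ) *
            (inner ℂ (iteratedDeriv (i : ℕ) x 1)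
              (P ((i : ℕ) + (j : ℕ) + 1) (iteratedDeriv (j : ℕ) x 1)) : ℂ).re
        else 0) -
      (∑ i : Fin N, ∑ j : Fin N,
        if (i : ℕ) + (j : ℕ) + 1 ≤ N then
          (-1 : ℝ) ^ (i : ℕ) *
            (inner ℂ (iteratedDeriv (i : ℕ) x 0)
              (P ((i : ℕ) + (j : ℕ) + 1) (iteratedDeriv (j : ℕ) x 0)) : ℂ).re
        else 0) := by
  classical
  -- derivatives of iterated derivatives
  have hder : ∀ n, n < N → ∀ t : ℝ, HasDerivAt (iteratedDeriv n x)
      (iteratedDeriv (n+1) x t) t := by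
    intro n hn t
    have h := (hx.differentiable_iteratedDeriv n (by exact_mod_cast hn)).differentiableAt
      (x := t)
    simpa [iteratedDeriv_succ] using h.hasDerivAt
  -- the potential function
  set F : ℝ → ℂ := fun t => ∑ k ∈ Finset.Icc 1 N, ∑ i ∈ Finset.range k,
    (-1:ℂ)^i * inner ℂ (iteratedDeriv i x t) (P k (iteratedDeriv (k-1-i) x t)) with hFdef
  set g : ℝ → ℂ := fun t => ∑ k ∈ Finset.Icc 1 N,
    (inner ℂ (x t) (P k (iteratedDeriv k x t))
      + (-1:ℂ)^(k+1) * inner ℂ (iteratedDeriv k x t) (P k (x t))) with hgdef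
  have hF : ∀ t, HasDerivAt F (g t) t := by
    intro t
    apply HasDerivAt.fun_sum
    intro k hk
    simp only [Finset.mem_Icc] at hk
    have hsum : HasDerivAt (fun t => ∑ i ∈ Finset.range k,
        (-1:ℂ)^i * inner ℂ (iteratedDeriv i x t) (P k (iteratedDeriv (k-1-i) x t)))
        (∑ i ∈ Finset.range k, (-1:ℂ)^i *
          ((inner ℂ (iteratedDeriv i x t) (P k (iteratedDeriv (k-i) x t)) : ℂ)
            + inner ℂ (iteratedDeriv (i+1) x t) (P k (iteratedDeriv (k-1-i) x t)))) t := by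
      apply HasDerivAt.fun_sum
      intro i hi
      simp only [Finset.mem_range] at hi
      have h1 : HasDerivAt (iteratedDeriv i x) (iteratedDeriv (i+1) x t) t :=
        hder i (by omega) t
      have h2 : HasDerivAt (iteratedDeriv (k-1-i) x) (iteratedDeriv (k-1-i+1) x t) t :=
        hder _ (by omega) t
      have h3 : HasDerivAt (fun s => P k (iteratedDeriv (k-1-i) x s))
          (P k (iteratedDeriv (k-i) x t)) t := by
        have h := ((P k).restrictScalars ℝ).hasFDerivAt.comp_hasDerivAt t h2
        rw [show k-1-i+1 = k-i from by omega] at h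
        exact h
      exact (HasDerivAt.inner ℂ h1 h3).const_mul _
    have hval : (∑ i ∈ Finset.range k, (-1:ℂ)^i *
          ((inner ℂ (iteratedDeriv i x t) (P k (iteratedDeriv (k-i) x t)) : ℂ)
            + inner ℂ (iteratedDeriv (i+1) x t) (P k (iteratedDeriv (k-1-i) x t))))
        = inner ℂ (x t) (P k (iteratedDeriv k x t))
          + (-1:ℂ)^(k+1) * inner ℂ (iteratedDeriv k x t) (P k (x t)) := by
      have hcongr : ∀ i ∈ Finset.range k, (-1:ℂ)^i *
          ((inner ℂ (iteratedDeriv i x t) (P k (iteratedDeriv (k-i) x t)) : ℂ)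
            + inner ℂ (iteratedDeriv (i+1) x t) (P k (iteratedDeriv (k-1-i) x t)))
          = (fun i => (-1:ℂ)^i *
              inner ℂ (iteratedDeriv i x t) (P k (iteratedDeriv (k-i) x t))) i
            - (fun i => (-1:ℂ)^i *
              inner ℂ (iteratedDeriv i x t) (P k (iteratedDeriv (k-i) x t))) (i+1) := by
        intro i hi
        simp only [Finset.mem_range] at hi
        simp only
        rw [show k - (i+1) = k-1-i from by omega]
        ring
      rw [Finset.sum_congr rfl hcongr, Finset.sum_range_sub']
      simp only [pow_zero, one_mul, Nat.sub_zero, Nat.sub_self, iteratedDeriv_zero]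
      ring
    rw [← hval]
    exact hsum
  have hFre : ∀ t, HasDerivAt (fun t => (F t).re) ((g t).re) t := by
    intro t
    exact (Complex.reCLM.hasFDerivAt.comp_hasDerivAt t (hF t))
  -- identify (g t).re
  have hg : ∀ t, (g t).re
      = 2 * (inner ℂ (∑ k ∈ Finset.Icc 1 N, P k (iteratedDeriv k x t)) (x t) : ℂ).re := by
    intro t
    rw [hgdef]
    simp only [sum_inner]
    rw [Complex.re_sum, Complex.re_sum, Finset.mul_sum]
    apply Finset.sum_congr rfl
    intro k hk
    simp only [Finset.mem_Icc] at hk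
    have h4 : (inner ℂ (iteratedDeriv k x t) (P k (x t)) : ℂ)
        = (-1:ℂ)^(k+1) * inner ℂ (P k (iteratedDeriv k x t)) (x t) := by
      rw [← adjoint_inner_left, hP k hk.1 hk.2]
      simp [inner_smul_left]
    rw [h4]
    have h5 : (inner ℂ (x t) (P k (iteratedDeriv k x t)) : ℂ)
        = starRingEnd ℂ (inner ℂ (P k (iteratedDeriv k x t)) (x t) : ℂ) := by
      rw [inner_conj_symm]
    rw [h5, ← mul_assoc, ← pow_add]
    have h6 : ((-1:ℂ))^(k+1+(k+1)) = 1 := by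
      apply Even.neg_one_pow
      exact ⟨k+1, by ring⟩
    rw [h6, one_mul, Complex.add_re, Complex.conj_re]
    ring
  -- FTC
  have hcont : Continuous fun t => (inner ℂ (∑ k ∈ Finset.Icc 1 N,
      P k (iteratedDeriv k x t)) (x t) : ℂ) := by
    apply Continuous.inner
    · apply continuous_finset_sum
      intro k hk
      simp only [Finset.mem_Icc] at hk
      exact (P k).continuous.comp (hx.continuous_iteratedDeriv k (by exact_mod_cast hk.2))
    · exact hx.continuous
  have hgcont : Continuous fun t => (g t).re := by
    have : (fun t => (g t).re) = fun t => 2 * (inner ℂ (∑ k ∈ Finset.Icc 1 N,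
        P k (iteratedDeriv k x t)) (x t) : ℂ).re := funext hg
    rw [this]
    exact (continuous_const.mul (Complex.continuous_re.comp hcont))
  have key : ∫ t in (0:ℝ)..1, (g t).re = (F 1).re - (F 0).re :=
    intervalIntegral.integral_eq_sub_of_hasDerivAt (fun t _ => hFre t)
      (hgcont.intervalIntegrable 0 1)
  -- rewrite LHS
  have hint : IntegrableOn (fun t => (inner ℂ (∑ k ∈ Finset.Icc 1 N,
      P k (iteratedDeriv k x t)) (x t) : ℂ)) (Set.Ioo (0:ℝ) 1) :=
    (hcont.integrableOn_Icc (a := 0) (b := 1)).mono_set Set.Ioo_subset_Icc_self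
  have hLHS : 2 * (∫ t in Set.Ioo (0:ℝ) 1,
      (inner ℂ (∑ k ∈ Finset.Icc 1 N, P k (iteratedDeriv k x t)) (x t) : ℂ)).re
      = ∫ t in (0:ℝ)..1, (g t).re := by
    have hre := integral_re hint
    simp only [RCLike.re_to_complex] at hre
    rw [← hre]
    rw [intervalIntegral.integral_of_le zero_le_one, integral_Ioc_eq_integral_Ioo]
    rw [← integral_const_mul]
    apply setIntegral_congr_fun measurableSet_Ioo
    intro t _
    exact (hg t).symm
  rw [hLHS, key]
  -- rewrite boundary terms
  have hFre2 : ∀ t, (F t).re = ∑ i ∈ Finset.range N, ∑ j ∈ Finset.range N,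
      if i + j + 1 ≤ N then (-1:ℝ)^i *
        (inner ℂ (iteratedDeriv i x t) (P (i+j+1) (iteratedDeriv j x t)) : ℂ).re
      else 0 := by
    intro t
    rw [← reindex_sum N (fun i j => (-1:ℝ)^i *
      (inner ℂ (iteratedDeriv i x t) (P (i+j+1) (iteratedDeriv j x t)) : ℂ).re)]
    rw [hFdef, Complex.re_sum]
    apply Finset.sum_congr rfl
    intro k hk
    simp only [Finset.mem_Icc] at hk
    rw [Complex.re_sum]
    apply Finset.sum_congr rfl
    intro i hi
    simp only [Finset.mem_range] at hi
    rw [show i + (k-1-i) + 1 = k from by omega]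
    rw [show ((-1:ℂ))^i = (((-1:ℝ)^i : ℝ) : ℂ) from by push_cast; ring,
      Complex.re_ofReal_mul]
  rw [hFre2 1, hFre2 0]
  have hconv : ∀ (c : ℕ → ℕ → ℝ),
      ∑ i ∈ Finset.range N, ∑ j ∈ Finset.range N, c i j
        = ∑ i : Fin N, ∑ j : Fin N, c i j := by
    intro c
    rw [← Fin.sum_univ_eq_sum_range (fun i => ∑ j ∈ Finset.range N, c i j) N]
    apply Finset.sum_congr rfl
    intro i _
    rw [← Fin.sum_univ_eq_sum_range (c i) N]
  congr 1
  · exact hconv (fun i j => if i + j + 1 ≤ N then (-1:ℝ)^i *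
      (inner ℂ (iteratedDeriv i x 1) (P (i+j+1) (iteratedDeriv j x 1)) : ℂ).re else 0)
  · exact hconv (fun i j => if i + j + 1 ≤ N then (-1:ℝ)^i *
      (inner ℂ (iteratedDeriv i x 0) (P (i+j+1) (iteratedDeriv j x 0)) : ℂ).re else 0)
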